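/- Let I be a finite index set, let f_i : X → (−∞,+∞] be proper for each i, let f := min_{i∈I} f_i, and let γ > 0. Then the Moreau envelope satisfies ^γf(x) = min_{i∈I} ^γf_i(x) for all x ∈ X, and prox_{γf}(x) = {p : p ∈ prox_{γf_i}(x) for some i ∈ I with ^γf(x) = ^γf_i(x)}. -/

import Mathlib

open Filter Topology RealInnerProductSpace

/-- `f : X → (−∞,+∞]` is proper: it never takes the value `−∞` and is somewhere
finite.  (We model `(−∞,+∞]`-valued functions as `EReal`-valued functions.) -/
def ProperFn {X : Type*} (f : X → EReal) : Prop :=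
  (∃ x, f x ≠ ⊤) ∧ ∀ x, f x ≠ ⊥

/-- The Moreau envelope `^γf(x) = inf_y (f(y) + (1/(2γ))‖x−y‖²)`. -/
noncomputable def moreau {X : Type*} [NormedAddCommGroup X]
    (γ : ℝ) (f : X → EReal) (x : X) : EReal :=
  ⨅ y : X, f y + ((1 / (2 * γ) * ‖x - y‖ ^ 2 : ℝ) : EReal)

/-- The proximal subdifferential `∂_p f(x)`. -/
def psubdiff {X : Type*} [NormedAddCommGroup X] [InnerProductSpace ℝ X]
    (f : X → EReal) (x : X) : Set X :=
  {v | ∃ γ > (0 : ℝ), ∃ δ > (0 : ℝ), ∀ y ∈ Metric.closedBall x δ,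
    ((⟪v, y - x⟫ : ℝ) : EReal) ≤ f y - f x + ((1 / (2 * γ) * ‖y - x‖ ^ 2 : ℝ) : EReal)}

/-- The proximity operator: points attaining the infimum in the Moreau envelope. -/
noncomputable def proxSet {X : Type*} [NormedAddCommGroup X]
    (γ : ℝ) (f : X → EReal) (x : X) : Set X :=
  {p | f p + ((1 / (2 * γ) * ‖x - p‖ ^ 2 : ℝ) : EReal) = moreau γ f x}


lemma iInf_add_real {ι : Type*} (g : ι → EReal) (c : ℝ) :
    (⨅ i, g i) + (c : EReal) = ⨅ i, (g i + (c : EReal)) := by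
  apply le_antisymm
  · exact le_iInf fun i => add_le_add_left (iInf_le _ i) _
  · rw [← EReal.sub_le_iff_le_add (.inl (EReal.coe_ne_bot c)) (.inl (EReal.coe_ne_top c))]
    refine le_iInf fun i => ?_
    rw [EReal.sub_le_iff_le_add (.inl (EReal.coe_ne_bot c)) (.inl (EReal.coe_ne_top c))]
    exact iInf_le _ i

lemma moreau_iInf {X I : Type*} [NormedAddCommGroup X] [Fintype I] [Nonempty I]
    (f : I → X → EReal) (γ : ℝ) (x : X) :
    moreau γ (fun y => ⨅ i, f i y) x = ⨅ i, moreau γ (f i) x := by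
  unfold moreau
  simp_rw [iInf_add_real]
  rw [iInf_comm]

/-- For `f = min_i f_i` with each `f_i` proper: `^γf = min_i {}^γf_i` and
`prox_{γf}(x) = {p : p ∈ prox_{γf_i}(x) for some i with ^γf(x) = ^γf_i(x)}`. -/
theorem stmt_14 {X I : Type*}
    [NormedAddCommGroup X] [InnerProductSpace ℝ X] [FiniteDimensional ℝ X]
    [Fintype I] [Nonempty I]
    (f : I → X → EReal) (hf : ∀ i, ProperFn (f i)) (γ : ℝ) (hγ : 0 < γ) :
    (∀ x : X, moreau γ (fun y => ⨅ i, f i y) x = ⨅ i, moreau γ (f i) x) ∧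
    (∀ x : X, proxSet γ (fun y => ⨅ i, f i y) x =
      {p | ∃ i, moreau γ (fun y => ⨅ j, f j y) x = moreau γ (f i) x ∧
        p ∈ proxSet γ (f i) x}) := by
  constructor
  · exact fun x => moreau_iInf f γ x
  · intro x
    ext p
    simp only [Set.mem_setOf_eq, proxSet, moreau_iInf f γ x]
    constructor
    · intro hp
      obtain ⟨i, hi⟩ := exists_eq_ciInf_of_finite (f := fun i => f i p)
      have h1 : moreau γ (f i) x ≤ f i p + ((1 / (2 * γ) * ‖x - p‖ ^ 2 : ℝ) : EReal) :=
        iInf_le _ p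
      have h2 : (⨅ j, moreau γ (f j) x) ≤ moreau γ (f i) x := iInf_le _ i
      rw [hi, hp] at h1
      have he : (⨅ j, moreau γ (f j) x) = moreau γ (f i) x := le_antisymm h2 h1
      refine ⟨i, he, ?_⟩
      rw [hi, hp, he]
    · rintro ⟨i, he, hp⟩
      apply le_antisymm
      · calc (⨅ j, f j p) + ((1 / (2 * γ) * ‖x - p‖ ^ 2 : ℝ) : EReal)
            ≤ f i p + ((1 / (2 * γ) * ‖x - p‖ ^ 2 : ℝ) : EReal) :=
              add_le_add_left (iInf_le _ i) _
          _ = ⨅ j, moreau γ (f j) x := by rw [hp, ← he]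
      · rw [← moreau_iInf f γ x]
        exact iInf_le _ p
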